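/- For s > 0 and |t| ≤ 1 and any integer ω ≥ 0, the modified Bessel function satisfies I_ω(2s·t) ≤ I_ω(2s) whenever t ∈ [0,1]; consequently the Fourier coefficients ĝ_ω of the extended k-SoS model g with Bessel kernel of parameter s satisfy |ĝ_ω| ≤ (Σ_{i,j}|R_iᵀR_j|) · Π_ℓ e^{−2s_ℓ} I_{|ω_ℓ|}(2s_ℓ), so that g belongs to the RKHS H_{2s} with kernel coefficients e^{−2s} I_{|ω|}(2s). -/

import Mathlib

open scoped BigOperators

/-- The modified Bessel function of the first kind. -/
noncomputable def besselI (n : ℕ) (z : ℝ) : ℝ :=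
  ∑' p : ℕ, (z / 2) ^ (2 * p + n) / ((p.factorial : ℝ) * ((p + n).factorial : ℝ))

lemma besselI_summable (w : ℕ) (b : ℝ) :
    Summable (fun p : ℕ => (b / 2) ^ (2 * p + w) / ((p.factorial : ℝ) * ((p + w).factorial : ℝ))) := by
  apply Summable.of_norm
  have h := (Real.summable_pow_div_factorial ((|b| / 2) ^ 2)).mul_left ((|b| / 2) ^ w)
  refine Summable.of_nonneg_of_le (fun p => norm_nonneg _) (fun p => ?_) h
  have hfac : (0 : ℝ) < p.factorial := by positivity
  have hfac2 : (p.factorial : ℝ) ≤ (p.factorial : ℝ) * ((p + w).factorial : ℝ) := by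
    have : (1:ℝ) ≤ ((p + w).factorial : ℝ) := by exact_mod_cast Nat.one_le_iff_ne_zero.mpr (Nat.factorial_ne_zero (p + w))
    nlinarith
  calc ‖(b / 2) ^ (2 * p + w) / ((p.factorial : ℝ) * ((p + w).factorial : ℝ))‖
      = (|b| / 2) ^ (2 * p + w) / ((p.factorial : ℝ) * ((p + w).factorial : ℝ)) := by
        rw [norm_div, norm_pow]
        simp [abs_div, abs_of_nonneg (by positivity : (0:ℝ) ≤ (p.factorial : ℝ) * ((p + w).factorial : ℝ))]
    _ ≤ (|b| / 2) ^ (2 * p + w) / (p.factorial : ℝ) := by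
        apply div_le_div_of_nonneg_left (by positivity) hfac hfac2
    _ = (|b| / 2) ^ w * (((|b| / 2) ^ 2) ^ p / (p.factorial : ℝ)) := by
        rw [← pow_mul, ← mul_div_assoc, ← pow_add]; ring_nf

lemma besselI_abs_le {w : ℕ} {a b : ℝ} (h : |a| ≤ b) : |besselI w a| ≤ besselI w b := by
  have hb : 0 ≤ b := le_trans (abs_nonneg a) h
  have hsa := besselI_summable w a
  have hsb := besselI_summable w b
  calc |besselI w a| ≤ ∑' p : ℕ, |(a / 2) ^ (2 * p + w) / ((p.factorial : ℝ) * ((p + w).factorial : ℝ))| := by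
        simpa only [Real.norm_eq_abs, besselI] using norm_tsum_le_tsum_norm (f := fun p : ℕ => (a / 2) ^ (2 * p + w) / ((p.factorial : ℝ) * ((p + w).factorial : ℝ))) (by simpa only [Real.norm_eq_abs] using hsa.abs)
    _ ≤ besselI w b := by
        apply Summable.tsum_le_tsum _ hsa.abs hsb
        intro p
        rw [abs_div, abs_pow, abs_of_nonneg (by positivity : (0:ℝ) ≤ (p.factorial : ℝ) * ((p + w).factorial : ℝ))]
        have hle : |a / 2| ≤ b / 2 := by rw [abs_div, abs_two]; linarith
        have := pow_le_pow_left₀ (abs_nonneg (a/2)) hle (2 * p + w)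
        exact (div_le_div_iff_of_pos_right (by positivity)).mpr this

lemma besselI_nonneg {w : ℕ} {b : ℝ} (hb : 0 ≤ b) : 0 ≤ besselI w b :=
  tsum_nonneg fun p => by positivity

lemma besselI_abs_le' (wn : ℕ) (s c : ℝ) (hspos : 0 < s) (hc : |c| ≤ 1) :
    |besselI wn (2 * s * c)| ≤ besselI wn (2 * s) := by
  apply besselI_abs_le
  rw [abs_mul, abs_of_pos (by linarith : (0:ℝ) < 2 * s)]
  nlinarith [abs_nonneg c]

theorem stmt18 {d r m : ℕ} (svec : Fin d → ℝ) (hs : ∀ ℓ, 0 < svec ℓ)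
    (R : Fin m → Fin r → ℝ) (z : Fin m → Fin d → ℝ) (ω : Fin d → ℤ) :
    (∀ s : ℝ, 0 < s → ∀ t ∈ Set.Icc (0 : ℝ) 1, ∀ w : ℕ,
      besselI w (2 * s * t) ≤ besselI w (2 * s)) ∧
    ‖∑ i : Fin m, ∑ j : Fin m, ((∑ k : Fin r, R i k * R j k : ℝ) : ℂ) *
        ∏ ℓ : Fin d,
          (((Real.exp (-(2 * svec ℓ)) *
            besselI (ω ℓ).natAbs (2 * svec ℓ * Real.cos (Real.pi * (z i ℓ - z j ℓ))) : ℝ) : ℂ) *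
            Complex.exp (-(Real.pi * Complex.I * ((ω ℓ : ℤ) : ℂ) * ((z i ℓ + z j ℓ : ℝ) : ℂ))))‖ ≤
      (∑ i : Fin m, ∑ j : Fin m, |∑ k : Fin r, R i k * R j k|) *
        ∏ ℓ : Fin d, Real.exp (-(2 * svec ℓ)) * besselI (ω ℓ).natAbs (2 * svec ℓ) := by
  constructor
  · intro s hspos t ht w
    refine le_trans (le_abs_self _) (besselI_abs_le' w s t hspos ?_)
    rw [abs_of_nonneg ht.1]; exact ht.2
  · set P : ℝ := ∏ ℓ : Fin d, Real.exp (-(2 * svec ℓ)) * besselI (ω ℓ).natAbs (2 * svec ℓ) with hP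
    have hfac_nn : ∀ ℓ : Fin d, 0 ≤ Real.exp (-(2 * svec ℓ)) * besselI (ω ℓ).natAbs (2 * svec ℓ) := by
      intro ℓ
      exact mul_nonneg (Real.exp_pos _).le (besselI_nonneg (by nlinarith [hs ℓ]))
    have hterm : ∀ i j : Fin m,
        ‖((∑ k : Fin r, R i k * R j k : ℝ) : ℂ) *
          ∏ ℓ : Fin d,
            (((Real.exp (-(2 * svec ℓ)) *
              besselI (ω ℓ).natAbs (2 * svec ℓ * Real.cos (Real.pi * (z i ℓ - z j ℓ))) : ℝ) : ℂ) *
              Complex.exp (-(Real.pi * Complex.I * ((ω ℓ : ℤ) : ℂ) * ((z i ℓ + z j ℓ : ℝ) : ℂ))))‖ ≤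
          |∑ k : Fin r, R i k * R j k| * P := by
      intro i j
      rw [norm_mul, norm_prod, Complex.norm_real, Real.norm_eq_abs]
      refine mul_le_mul_of_nonneg_left ?_ (abs_nonneg _)
      refine Finset.prod_le_prod (fun ℓ _ => norm_nonneg _) (fun ℓ _ => ?_)
      rw [norm_mul]
      have hz : ‖Complex.exp (-(Real.pi * Complex.I * ((ω ℓ : ℤ) : ℂ) * ((z i ℓ + z j ℓ : ℝ) : ℂ)))‖ = 1 := by
        rw [Complex.norm_exp]
        have : (-((Real.pi : ℂ) * Complex.I * ((ω ℓ : ℤ) : ℂ) * ((z i ℓ + z j ℓ : ℝ) : ℂ))).re = 0 := by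
          simp [Complex.mul_re, Complex.mul_im]
        rw [this, Real.exp_zero]
      rw [hz, mul_one, Complex.norm_real, Real.norm_eq_abs, abs_mul,
        abs_of_pos (Real.exp_pos _)]
      gcongr
      exact besselI_abs_le' _ _ _ (hs ℓ) (Real.abs_cos_le_one _)
    calc ‖∑ i : Fin m, ∑ j : Fin m, ((∑ k : Fin r, R i k * R j k : ℝ) : ℂ) *
          ∏ ℓ : Fin d,
            (((Real.exp (-(2 * svec ℓ)) *
              besselI (ω ℓ).natAbs (2 * svec ℓ * Real.cos (Real.pi * (z i ℓ - z j ℓ))) : ℝ) : ℂ) *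
              Complex.exp (-(Real.pi * Complex.I * ((ω ℓ : ℤ) : ℂ) * ((z i ℓ + z j ℓ : ℝ) : ℂ))))‖
        ≤ ∑ i : Fin m, ∑ j : Fin m, |∑ k : Fin r, R i k * R j k| * P := by
          refine le_trans (norm_sum_le _ _) (Finset.sum_le_sum fun i _ => ?_)
          refine le_trans (norm_sum_le _ _) (Finset.sum_le_sum fun j _ => ?_)
          exact hterm i j
      _ = (∑ i : Fin m, ∑ j : Fin m, |∑ k : Fin r, R i k * R j k|) * P := by
          rw [Finset.sum_mul]
          exact Finset.sum_congr rfl fun i _ => (Finset.sum_mul _ _ _).symm
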